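/- arXiv:1009.2952 — 2 statements merged into one kernel-verified Lean document; each statement's English description precedes it below -/
import Mathlib

section
/- If d·tanh(β) ≤ 1 (with d ≥ 1 an integer and β > 0), then the map x ↦ d·φ(x) has x = 0 as its unique fixed point. -/
/-- The inverse hyperbolic tangent, arctanh x = (1/2)·log((1+x)/(1-x)). -/
noncomputable def artanh (x : ℝ) : ℝ := (1 / 2) * Real.log ((1 + x) / (1 - x))

/-- The one-step Ising tree recursion function φ(x) = arctanh(tanh β · tanh x). -/
noncomputable def phi (β x : ℝ) : ℝ := artanh (Real.tanh β * Real.tanh x)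

open Real

lemma my_tanh_lt_one (x : ℝ) : Real.tanh x < 1 := by
  rw [Real.tanh_eq_sinh_div_cosh, div_lt_one (Real.cosh_pos x)]
  exact Real.sinh_lt_cosh x

lemma my_neg_one_lt_tanh (x : ℝ) : -1 < Real.tanh x := by
  have := my_tanh_lt_one (-x)
  rw [Real.tanh_neg] at this
  linarith

lemma my_abs_tanh_lt_one (x : ℝ) : |Real.tanh x| < 1 :=
  abs_lt.2 ⟨my_neg_one_lt_tanh x, my_tanh_lt_one x⟩

lemma my_tanh_pos {x : ℝ} (hx : 0 < x) : 0 < Real.tanh x := by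
  rw [Real.tanh_eq_sinh_div_cosh]
  exact div_pos (Real.sinh_pos_iff.2 hx) (Real.cosh_pos x)

lemma my_hasDerivAt_tanh (x : ℝ) : HasDerivAt Real.tanh (1 / Real.cosh x ^ 2) x := by
  have h := (Real.hasDerivAt_sinh x).div (Real.hasDerivAt_cosh x) (Real.cosh_pos x).ne'
  have heq : (Real.cosh x * Real.cosh x - Real.sinh x * Real.sinh x) / Real.cosh x ^ 2
      = 1 / Real.cosh x ^ 2 := by
    rw [← sq, ← sq, Real.cosh_sq_sub_sinh_sq]
  rw [heq] at h
  have hfun : (Real.sinh / Real.cosh) = Real.tanh := by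
    funext y; rw [Pi.div_apply, Real.tanh_eq_sinh_div_cosh]
  rwa [hfun] at h

lemma my_tanh_strictMono : StrictMono Real.tanh := by
  apply strictMono_of_deriv_pos
  intro x
  rw [(my_hasDerivAt_tanh x).deriv]
  positivity

/-- Strict concavity-type inequality: c·tanh x < tanh(c·x) for 0 < c < 1, x > 0. -/
lemma key_ineq {c x : ℝ} (hc0 : 0 < c) (hc1 : c < 1) (hx : 0 < x) :
    c * Real.tanh x < Real.tanh (c * x) := by
  set g : ℝ → ℝ := fun y => Real.tanh (c * y) - c * Real.tanh y with hg
  have hderiv : ∀ y : ℝ, HasDerivAt g (c * (1 / Real.cosh (c * y) ^ 2) - c * (1 / Real.cosh y ^ 2)) y := by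
    intro y
    have hin : HasDerivAt (fun y : ℝ => c * y) c y := by
      simpa using (hasDerivAt_id y).const_mul c
    have h1 : HasDerivAt (fun y => Real.tanh (c * y)) ((1 / Real.cosh (c * y) ^ 2) * c) y :=
      (my_hasDerivAt_tanh (c * y)).comp y hin
    have h2 := (my_hasDerivAt_tanh y).const_mul c
    have := h1.sub h2
    rw [show c * (1 / Real.cosh (c * y) ^ 2) - c * (1 / Real.cosh y ^ 2)
      = 1 / Real.cosh (c * y) ^ 2 * c - c * (1 / Real.cosh y ^ 2) by ring]
    exact this
  have hmono : StrictMonoOn g (Set.Ici 0) := by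
    apply strictMonoOn_of_deriv_pos (convex_Ici 0)
    · intro y _
      exact (hderiv y).continuousAt.continuousWithinAt
    · intro y hy
      rw [interior_Ici] at hy
      rw [(hderiv y).deriv]
      have hy0 : 0 < y := hy
      have hcy : c * y < y := by nlinarith
      have hcy0 : 0 ≤ c * y := mul_nonneg hc0.le hy0.le
      have hcosh : Real.cosh (c * y) < Real.cosh y := by
        rw [Real.cosh_lt_cosh]
        rw [abs_of_nonneg hcy0, abs_of_nonneg hy0.le]
        exact hcy
      have h1 : 0 < Real.cosh (c * y) := Real.cosh_pos _
      have h2 : Real.cosh (c * y) ^ 2 < Real.cosh y ^ 2 := by nlinarith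
      have : 1 / Real.cosh y ^ 2 < 1 / Real.cosh (c * y) ^ 2 := by
        apply one_div_lt_one_div_of_lt
        · positivity
        · exact h2
      nlinarith
  have h0 : g 0 = 0 := by simp [hg]
  have := hmono (Set.self_mem_Ici) (Set.mem_Ici.2 hx.le) hx
  rw [h0] at this
  simp only [hg] at this
  linarith

lemma tanh_artanh {u : ℝ} (hu : |u| < 1) : Real.tanh (_root_.artanh u) = u := by
  obtain ⟨h1, h2⟩ := abs_lt.1 hu
  have hu1 : (0:ℝ) < 1 - u := by linarith
  have hu2 : (0:ℝ) < 1 + u := by linarith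
  have hr : (0:ℝ) < (1 + u) / (1 - u) := div_pos hu2 hu1
  have hexp : Real.exp (2 * _root_.artanh u) = (1 + u) / (1 - u) := by
    rw [_root_.artanh]
    rw [show 2 * ((1:ℝ)/2 * Real.log ((1 + u) / (1 - u))) = Real.log ((1+u)/(1-u)) by ring]
    exact Real.exp_log hr
  rw [Real.tanh_eq_sinh_div_cosh, Real.sinh_eq, Real.cosh_eq]
  set a := _root_.artanh u
  have he : Real.exp a * Real.exp a = (1 + u) / (1 - u) := by
    rw [← Real.exp_add, ← hexp]; ring_nf
  have hea : 0 < Real.exp a := Real.exp_pos a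
  have hena : Real.exp (-a) = (Real.exp a)⁻¹ := Real.exp_neg a
  rw [hena]
  have hs : Real.exp a + (Real.exp a)⁻¹ ≠ 0 := by positivity
  have he2 : Real.exp a * Real.exp a * (1 - u) = 1 + u := by
    rw [he]; field_simp
  field_simp
  nlinarith [he2]

theorem stmt_2 (β : ℝ) (d : ℕ) (hβ : 0 < β) (hd : 1 ≤ d)
    (hw : (d : ℝ) * Real.tanh β ≤ 1) :
    ∀ x : ℝ, (d : ℝ) * phi β x = x ↔ x = 0 := by
  intro x
  have hd0 : (0:ℝ) < d := by exact_mod_cast hd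
  have htβ : 0 < Real.tanh β := my_tanh_pos hβ
  have htβ1 : Real.tanh β < 1 := my_tanh_lt_one β
  have hβd : Real.tanh β ≤ 1 / d := by
    rw [le_div_iff₀ hd0]; linarith [hw]
  -- key: for y > 0, tanh β * tanh y < tanh (y / d)
  have key : ∀ y : ℝ, 0 < y → Real.tanh β * Real.tanh y < Real.tanh (y / d) := by
    intro y hy
    have h1 : Real.tanh β * Real.tanh y < Real.tanh (Real.tanh β * y) :=
      key_ineq htβ htβ1 hy
    have h2 : Real.tanh (Real.tanh β * y) ≤ Real.tanh (y / d) := by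
      apply my_tanh_strictMono.monotone
      rw [div_eq_mul_inv, mul_comm y]
      apply mul_le_mul_of_nonneg_right _ hy.le
      rw [← one_div]
      exact hβd
    linarith
  constructor
  · intro hfix
    by_contra hx
    have habs : |Real.tanh β * Real.tanh x| < 1 := by
      rw [abs_mul]
      calc |Real.tanh β| * |Real.tanh x| ≤ |Real.tanh β| * 1 := by
            apply mul_le_mul_of_nonneg_left (my_abs_tanh_lt_one x).le (abs_nonneg _)
        _ = |Real.tanh β| := mul_one _
        _ < 1 := my_abs_tanh_lt_one β
    have hphi : phi β x = x / d := by
      field_simp at hfix ⊢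
      linarith [hfix]
    have heq : Real.tanh β * Real.tanh x = Real.tanh (x / d) := by
      rw [← hphi, phi, tanh_artanh habs]
    rcases lt_trichotomy x 0 with hlt | heq0 | hgt
    · have := key (-x) (by linarith)
      rw [Real.tanh_neg, show -x / d = -(x/d) by ring, Real.tanh_neg] at this
      nlinarith [heq]
    · exact hx heq0
    · linarith [key x hgt, heq.le]
  · intro hx
    subst hx
    simp [phi, _root_.artanh, Real.tanh_zero]
end

section
/- If d·tanh(β) > 1 (with d > 1 and β > 0), then the map x ↦ d·φ(x) has exactly three fixed points: 0, a positive fixed point h⁺, and its negative -h⁺. Moreover d·φ(x) > x for all x ∈ (0, h⁺) and d·φ(x) < x for all x > h⁺. -/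
open Real

lemma my_tanh_eq (x : ℝ) : tanh x = (exp (2*x) - 1) / (exp (2*x) + 1) := by
  rw [Real.tanh_eq_sinh_div_cosh, Real.sinh_eq, Real.cosh_eq,
    show (2:ℝ)*x = x + x by ring, Real.exp_add, Real.exp_neg]
  have h1 := Real.exp_pos x
  have h2 : exp x + (exp x)⁻¹ > 0 := by positivity
  field_simp

lemma my_tanh_pos_s3 {β : ℝ} (hβ : 0 < β) : 0 < tanh β := by
  rw [my_tanh_eq]
  have h1 : 1 < exp (2*β) := by
    rw [show (1:ℝ) = exp 0 by simp]
    exact Real.exp_lt_exp.2 (by linarith)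
  have h2 : (0:ℝ) < exp (2*β) + 1 := by positivity
  exact div_pos (by linarith) h2

lemma my_tanh_lt_one_s3 (β : ℝ) : tanh β < 1 := by
  rw [my_tanh_eq]
  have h := Real.exp_pos (2*β)
  rw [div_lt_one (by linarith)]
  linarith

/-- φ in exponential form. -/
lemma phi_formula (β x : ℝ) :
    phi β x = (1/2) * (Real.log ((1 + tanh β) * exp (2*x) + (1 - tanh β))
      - Real.log ((1 - tanh β) * exp (2*x) + (1 + tanh β))) := by
  have htβ1 : tanh β < 1 := my_tanh_lt_one_s3 β
  have htβ2 : -1 < tanh β := by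
    have := my_tanh_lt_one_s3 (-β)
    rw [show tanh (-β) = -tanh β from Real.tanh_neg β] at this
    linarith
  have hE : (0:ℝ) < exp (2*x) := Real.exp_pos _
  have hE1 : (0:ℝ) < exp (2*x) + 1 := by linarith
  have hP : (0:ℝ) < (1 + tanh β) * exp (2*x) + (1 - tanh β) := by nlinarith
  have hQ : (0:ℝ) < (1 - tanh β) * exp (2*x) + (1 + tanh β) := by nlinarith
  rw [phi, _root_.artanh, my_tanh_eq x]
  congr 1
  rw [← Real.log_div hP.ne' hQ.ne']
  have e1 : 1 + tanh β * ((exp (2*x) - 1) / (exp (2*x) + 1))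
      = ((1 + tanh β) * exp (2*x) + (1 - tanh β)) / (exp (2*x) + 1) := by
    field_simp; ring
  have e2 : 1 - tanh β * ((exp (2*x) - 1) / (exp (2*x) + 1))
      = ((1 - tanh β) * exp (2*x) + (1 + tanh β)) / (exp (2*x) + 1) := by
    field_simp; ring
  rw [e1, e2]
  congr 1
  rw [div_div_div_eq]
  rw [mul_comm ((1 + tanh β) * exp (2*x) + (1 - tanh β)) (exp (2*x) + 1)]
  rw [mul_div_mul_left _ _ (ne_of_gt hE1)]

/-- φ is odd. -/
lemma phi_odd (β x : ℝ) : phi β (-x) = - phi β x := by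
  have htβ1 : tanh β < 1 := my_tanh_lt_one_s3 β
  have htβ2 : -1 < tanh β := by
    have := my_tanh_lt_one_s3 (-β)
    rw [show tanh (-β) = -tanh β from Real.tanh_neg β] at this
    linarith
  have hE : (0:ℝ) < exp (2*x) := Real.exp_pos _
  have hP : (0:ℝ) < (1 + tanh β) * exp (2*x) + (1 - tanh β) := by nlinarith
  have hQ : (0:ℝ) < (1 - tanh β) * exp (2*x) + (1 + tanh β) := by nlinarith
  rw [phi_formula, phi_formula]
  have hneg : exp (2*(-x)) = (exp (2*x))⁻¹ := by
    rw [← Real.exp_neg]; ring_nf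
  rw [hneg]
  have e1 : (1 + tanh β) * (exp (2*x))⁻¹ + (1 - tanh β)
      = ((1 - tanh β) * exp (2*x) + (1 + tanh β)) / exp (2*x) := by
    field_simp; ring
  have e2 : (1 - tanh β) * (exp (2*x))⁻¹ + (1 + tanh β)
      = ((1 + tanh β) * exp (2*x) + (1 - tanh β)) / exp (2*x) := by
    field_simp; ring
  rw [e1, e2, Real.log_div hQ.ne' hE.ne', Real.log_div hP.ne' hE.ne']
  ring

/-- φ < β. -/
lemma phi_lt (β x : ℝ) (hβ : 0 < β) : phi β x < β := by
  have ht0 : 0 < tanh β := my_tanh_pos_s3 hβ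
  have htβ1 : tanh β < 1 := my_tanh_lt_one_s3 β
  have hE : (0:ℝ) < exp (2*x) := Real.exp_pos _
  have hP : (0:ℝ) < (1 + tanh β) * exp (2*x) + (1 - tanh β) := by nlinarith
  have hQ : (0:ℝ) < (1 - tanh β) * exp (2*x) + (1 + tanh β) := by nlinarith
  rw [phi_formula]
  -- (1+t)/(1-t) = exp (2β)
  have hkey : (1 + tanh β) = (1 - tanh β) * exp (2*β) := by
    rw [my_tanh_eq β]
    have hEβ : (0:ℝ) < exp (2*β) := Real.exp_pos _
    field_simp
    ring
  have hratio : (1 + tanh β) * exp (2*x) + (1 - tanh β)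
      < ((1 - tanh β) * exp (2*x) + (1 + tanh β)) * exp (2*β) := by
    rw [hkey]
    have hEβ : (1:ℝ) < exp (2*β) := by
      rw [show (1:ℝ) = exp 0 by simp]
      exact Real.exp_lt_exp.2 (by linarith)
    nlinarith
  have hlog := Real.log_lt_log hP hratio
  rw [Real.log_mul hQ.ne' (Real.exp_pos _).ne', Real.log_exp] at hlog
  linarith

/-- Derivative of φ. -/
lemma phi_hasDerivAt (β x : ℝ) (hβ : 0 < β) :
    HasDerivAt (phi β)
      (4 * tanh β * exp (2*x) /
        (((1 + tanh β) * exp (2*x) + (1 - tanh β)) *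
         ((1 - tanh β) * exp (2*x) + (1 + tanh β)))) x := by
  have ht0 : 0 < tanh β := my_tanh_pos_s3 hβ
  have htβ1 : tanh β < 1 := my_tanh_lt_one_s3 β
  set t := tanh β with ht
  have key : ∀ y : ℝ, phi β y = (1/2) * (Real.log ((1 + t) * exp (2*y) + (1 - t))
      - Real.log ((1 - t) * exp (2*y) + (1 + t))) := fun y => phi_formula β y
  rw [show phi β = fun y => (1/2) * (Real.log ((1 + t) * exp (2*y) + (1 - t))
      - Real.log ((1 - t) * exp (2*y) + (1 + t))) from funext key]
  have hE : (0:ℝ) < exp (2*x) := Real.exp_pos _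
  have hP : (0:ℝ) < (1 + t) * exp (2*x) + (1 - t) := by nlinarith
  have hQ : (0:ℝ) < (1 - t) * exp (2*x) + (1 + t) := by nlinarith
  have h0 : HasDerivAt (fun y : ℝ => 2*y) 2 x := by
    simpa using (hasDerivAt_id x).const_mul 2
  have hexp : HasDerivAt (fun y : ℝ => exp (2*y)) (exp (2*x) * 2) x :=
    (Real.hasDerivAt_exp (2*x)).comp x h0
  have h1 : HasDerivAt (fun y : ℝ => (1 + t) * exp (2*y) + (1 - t))
      ((1 + t) * (exp (2*x) * 2)) x := ((hexp.const_mul (1+t)).add_const _)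
  have h2 : HasDerivAt (fun y : ℝ => (1 - t) * exp (2*y) + (1 + t))
      ((1 - t) * (exp (2*x) * 2)) x := ((hexp.const_mul (1-t)).add_const _)
  have hl1 := (h1.log hP.ne')
  have hl2 := (h2.log hQ.ne')
  have := ((hl1.sub hl2).const_mul (1/2 : ℝ))
  refine this.congr_deriv ?_
  rw [div_sub_div _ _ hP.ne' hQ.ne']
  field_simp
  ring

theorem stmt_3 (β d : ℝ) (hβ : 0 < β) (hd : 1 < d) (hw : 1 < d * Real.tanh β) :
    ∃ hp : ℝ, 0 < hp ∧
      (∀ x : ℝ, d * phi β x = x ↔ x = 0 ∨ x = hp ∨ x = -hp) ∧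
      (∀ x ∈ Set.Ioo 0 hp, x < d * phi β x) ∧
      (∀ x : ℝ, hp < x → d * phi β x < x) := by
  have ht0 : 0 < tanh β := my_tanh_pos_s3 hβ
  have ht1 : tanh β < 1 := my_tanh_lt_one_s3 β
  have hd0 : (0:ℝ) < d := by linarith
  set t := tanh β with htdef
  set F : ℝ → ℝ := fun x => d * phi β x - x with hFdef
  have hFd : ∀ x : ℝ, HasDerivAt F
      (d * (4 * t * exp (2*x) /
        (((1 + t) * exp (2*x) + (1 - t)) * ((1 - t) * exp (2*x) + (1 + t)))) - 1) x := by
    intro x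
    exact ((phi_hasDerivAt β x hβ).const_mul d).sub (hasDerivAt_id x)
  have hFderiv : ∀ x : ℝ, deriv F x
      = d * (4 * t * exp (2*x) /
        (((1 + t) * exp (2*x) + (1 - t)) * ((1 - t) * exp (2*x) + (1 + t)))) - 1 :=
    fun x => (hFd x).deriv
  have hFcont : Continuous F := by
    have : Differentiable ℝ F := fun x => (hFd x).differentiableAt
    exact this.continuous
  have hF0 : F 0 = 0 := by
    simp [hFdef, phi, _root_.artanh, Real.tanh_zero]
  -- strict concavity on [0, ∞)
  have hanti : StrictAntiOn (deriv F) (interior (Set.Ici (0:ℝ))) := by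
    rw [interior_Ici]
    intro x hx y hy hxy
    rw [hFderiv, hFderiv]
    have hx0 : (0:ℝ) < x := hx
    have hy0 : (0:ℝ) < y := hy
    have hEx : (1:ℝ) < exp (2*x) := by
      rw [show (1:ℝ) = exp 0 by simp]; exact Real.exp_lt_exp.2 (by linarith)
    have hEy : (1:ℝ) < exp (2*y) := by
      rw [show (1:ℝ) = exp 0 by simp]; exact Real.exp_lt_exp.2 (by linarith)
    have hExy : exp (2*x) < exp (2*y) := Real.exp_lt_exp.2 (by linarith)
    have hPx : (0:ℝ) < (1 + t) * exp (2*x) + (1 - t) := by nlinarith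
    have hQx : (0:ℝ) < (1 - t) * exp (2*x) + (1 + t) := by nlinarith
    have hPy : (0:ℝ) < (1 + t) * exp (2*y) + (1 - t) := by nlinarith
    have hQy : (0:ℝ) < (1 - t) * exp (2*y) + (1 + t) := by nlinarith
    have hmain : 4 * t * exp (2*y) /
        (((1 + t) * exp (2*y) + (1 - t)) * ((1 - t) * exp (2*y) + (1 + t)))
        < 4 * t * exp (2*x) /
        (((1 + t) * exp (2*x) + (1 - t)) * ((1 - t) * exp (2*x) + (1 + t))) := by
      rw [div_lt_div_iff₀ (by positivity) (by positivity)]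
      have h1 : (0:ℝ) < exp (2*y) - exp (2*x) := by linarith
      have h2 : (0:ℝ) < exp (2*x) * exp (2*y) - 1 := by nlinarith
      nlinarith [mul_pos h1 h2, mul_pos (mul_pos h1 h2) (mul_pos ht0 (by nlinarith : (0:ℝ) < 1 - t^2))]
    have := mul_lt_mul_of_pos_left hmain hd0
    linarith
  have hconc : StrictConcaveOn ℝ (Set.Ici (0:ℝ)) F :=
    hanti.strictConcaveOn_of_deriv (convex_Ici 0) hFcont.continuousOn
  -- derivative at zero is positive : find y > 0 with F y > 0
  have hF'0 : HasDerivAt F (d * t - 1) 0 := by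
    have := hFd 0
    convert this using 1
    rw [show (2:ℝ) * 0 = 0 by ring, Real.exp_zero]
    field_simp
    ring
  have hpos : ∃ y : ℝ, 0 < y ∧ 0 < F y := by
    rw [hasDerivAt_iff_tendsto_slope] at hF'0
    have hev : ∀ᶠ z in nhdsWithin 0 {(0:ℝ)}ᶜ, 0 < slope F 0 z :=
      hF'0.eventually (eventually_gt_nhds (by linarith))
    have hle : nhdsWithin (0:ℝ) (Set.Ioi 0) ≤ nhdsWithin 0 {(0:ℝ)}ᶜ :=
      nhdsWithin_mono 0 (fun z hz => ne_of_gt hz)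
    have hev2 : ∀ᶠ z in nhdsWithin (0:ℝ) (Set.Ioi 0), 0 < slope F 0 z := hle hev
    obtain ⟨y, hy1, hy2⟩ := (hev2.and self_mem_nhdsWithin).exists
    refine ⟨y, hy2, ?_⟩
    have := hy1
    rw [slope_def_field] at this
    have hy0 : (0:ℝ) < y := hy2
    have : 0 < (F y - F 0) / (y - 0) := this
    rw [hF0] at this
    have := mul_pos this (show (0:ℝ) < y - 0 by linarith)
    rw [div_mul_cancel₀] at this
    · linarith
    · linarith
  obtain ⟨y, hy0, hFy⟩ := hpos
  -- F is negative at M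
  set M : ℝ := d * β + y + 1 with hMdef
  have hyM : y < M := by nlinarith
  have hFM : F M < 0 := by
    have := phi_lt β M hβ
    have : d * phi β M < d * β := by nlinarith
    simp only [hFdef]
    nlinarith
  -- IVT
  have hivt : ∃ c ∈ Set.Ioo y M, F c = 0 := by
    have h := intermediate_value_Ioo' (le_of_lt hyM) hFcont.continuousOn
    have : (0:ℝ) ∈ Set.Ioo (F M) (F y) := ⟨hFM, hFy⟩
    obtain ⟨c, hc, hc2⟩ := h this
    exact ⟨c, hc, hc2⟩
  obtain ⟨hp, hhp, hFhp⟩ := hivt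
  have hp0 : 0 < hp := lt_trans hy0 hhp.1
  -- sign facts from strict concavity
  have sign1 : ∀ x : ℝ, 0 < x → x < hp → 0 < F x := by
    intro x hx1 hx2
    have h2 := hconc.2 (Set.self_mem_Ici) (Set.mem_Ici.2 hp0.le) (ne_of_lt hp0)
      (show (0:ℝ) < 1 - x/hp by rw [sub_pos]; exact (div_lt_one hp0).2 hx2)
      (show (0:ℝ) < x/hp by positivity) (by ring)
    rw [smul_eq_mul, smul_eq_mul, smul_eq_mul, smul_eq_mul] at h2
    rw [hF0, hFhp] at h2
    have hx : (1 - x/hp) * 0 + (x/hp) * hp = x := by field_simp; ring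
    rw [hx] at h2
    simpa using h2
  have sign2 : ∀ x : ℝ, hp < x → F x < 0 := by
    intro x hx
    have hx0 : 0 < x := lt_trans hp0 hx
    have h2 := hconc.2 (Set.self_mem_Ici) (Set.mem_Ici.2 hx0.le) (ne_of_lt hx0)
      (show (0:ℝ) < 1 - hp/x by rw [sub_pos]; exact (div_lt_one hx0).2 hx)
      (show (0:ℝ) < hp/x by positivity) (by ring)
    rw [smul_eq_mul, smul_eq_mul, smul_eq_mul, smul_eq_mul] at h2
    rw [hF0] at h2
    have hxx : (1 - hp/x) * 0 + (hp/x) * x = hp := by field_simp; ring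
    rw [hxx, hFhp] at h2
    have hq : 0 < hp / x := by positivity
    have h3 : hp / x * F x < 0 := by
      have : (1 - hp/x) * 0 + hp/x * F x < 0 := h2
      linarith
    by_contra hcon
    push_neg at hcon
    have := mul_nonneg hq.le hcon
    linarith
  have uniq : ∀ x : ℝ, 0 < x → F x = 0 → x = hp := by
    intro x hx hFx
    rcases lt_trichotomy x hp with h | h | h
    · exact absurd hFx (ne_of_gt (sign1 x hx h))
    · exact h
    · exact absurd hFx (ne_of_lt (sign2 x h))
  have hFodd : ∀ x : ℝ, F (-x) = - F x := by
    intro x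
    simp only [hFdef, phi_odd]
    ring
  refine ⟨hp, hp0, ?_, ?_, ?_⟩
  · intro x
    constructor
    · intro hfix
      have hFx : F x = 0 := by simp only [hFdef]; linarith
      rcases lt_trichotomy x 0 with h | h | h
      · right; right
        have : F (-x) = 0 := by rw [hFodd, hFx]; ring
        have := uniq (-x) (by linarith) this
        linarith
      · left; exact h
      · right; left; exact uniq x h hFx
    · intro hcase
      rcases hcase with h | h | h
      · subst h
        simp [phi, _root_.artanh, Real.tanh_zero]
      · subst h
        simp only [hFdef] at hFhp
        linarith
      · subst h
        have : F (-(-hp)) = - F (-hp) := hFodd (-hp)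
        rw [neg_neg] at this
        have h2 : F (-hp) = 0 := by
          have := hFodd hp
          rw [hFhp] at this
          linarith
        simp only [hFdef] at h2
        linarith
  · intro x hx
    have := sign1 x hx.1 hx.2
    simp only [hFdef] at this
    linarith
  · intro x hx
    have := sign2 x hx
    simp only [hFdef] at this
    linarith
end
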